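/- For every constant c ∈ ℕ there exist n ∈ ℕ, k ∈ ℕ, and a set Γ of k pairwise non-isomorphic posets each of size n, such that Γ has a witness but no witness of Γ has size at most n + k + c. -/

import Mathlib

/-!
Formalization framework: finite posets are bundled as `FinPartOrd.{0}`, downsets are
`Finset`s of elements, unlabelled posets are isomorphism classes (`UPoset`), and a witness
of a set `Γ` of unlabelled posets at size `n` is a finite poset whose set of size-`n`
downsets, up to isomorphism, is exactly `Γ`.
-/

attribute [local instance] Classical.propDecidable

noncomputable section

open Finset

/-- `D` is a downset of the finite poset `Q`. -/
def IsDownset (Q : FinPartOrd.{0}) (D : Finset ↥Q) : Prop :=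
  ∀ ⦃a b : ↥Q⦄, a ∈ D → b ≤ a → b ∈ D

/-- The induced subposet of `Q` on a finset `D` of its elements. -/
def subposet (Q : FinPartOrd.{0}) (D : Finset ↥Q) : FinPartOrd.{0} :=
  FinPartOrd.of {x : ↥Q // x ∈ D}

/-- The isomorphism setoid on finite posets. -/
def isoSetoid : Setoid FinPartOrd.{0} where
  r P Q := Nonempty (↥P ≃o ↥Q)
  iseqv := ⟨fun _ => ⟨OrderIso.refl _⟩, fun ⟨e⟩ => ⟨e.symm⟩, fun ⟨e⟩ ⟨f⟩ => ⟨e.trans f⟩⟩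

/-- Unlabelled finite posets: isomorphism classes of finite posets. -/
def UPoset := Quotient isoSetoid

/-- The isomorphism class of a finite poset. -/
def cls (P : FinPartOrd.{0}) : UPoset := Quotient.mk isoSetoid P

/-- The number of elements of a finite poset. -/
def size (Q : FinPartOrd.{0}) : ℕ := Fintype.card ↥Q

/-- The size of an isomorphism class of finite posets. -/
def usize : UPoset → ℕ :=
  Quotient.lift size fun _ _ h => h.elim fun e => Fintype.card_congr e.toEquiv

/-- `D_n(Q)` : the set of downsets of `Q` of size `n`, up to isomorphism. -/
def DSet (n : ℕ) (Q : FinPartOrd.{0}) : Set UPoset :=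
  {c | ∃ D : Finset ↥Q, IsDownset Q D ∧ D.card = n ∧ cls (subposet Q D) = c}

/-- `d_n(Q)` : the number of isomorphism classes of downsets of `Q` of size `n`. -/
def dNum (n : ℕ) (Q : FinPartOrd.{0}) : ℕ := (DSet n Q).ncard

/-- `D(Q)` : the set of nonempty downsets of `Q`, up to isomorphism. -/
def DAllSet (Q : FinPartOrd.{0}) : Set UPoset :=
  {c | ∃ D : Finset ↥Q, IsDownset Q D ∧ D.Nonempty ∧ cls (subposet Q D) = c}

/-- `Q` is a witness of the set `Γ` of unlabelled posets (at size `n`): the set of size-`n`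
downsets of `Q`, up to isomorphism, is exactly `Γ`. -/
def IsWitness (n : ℕ) (Γ : Set UPoset) (Q : FinPartOrd.{0}) : Prop := DSet n Q = Γ

/-- `Q` is a minimal witness of `Γ` : `Q` is a witness and no proper downset of `Q` is
itself a witness of `Γ`. -/
def IsMinimalWitness (n : ℕ) (Γ : Set UPoset) (Q : FinPartOrd.{0}) : Prop :=
  IsWitness n Γ Q ∧
    ∀ D : Finset ↥Q, IsDownset Q D → D ≠ Finset.univ → ¬IsWitness n Γ (subposet Q D)

/-- The height of an element: the number of elements of a longest chain whose maximum is `x`. -/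
def heightEl (Q : FinPartOrd.{0}) (x : ↥Q) : ℕ :=
  sSup {k | ∃ c : Finset ↥Q, IsChain (· ≤ ·) (c : Set ↥Q) ∧ x ∈ c ∧ (∀ y ∈ c, y ≤ x) ∧ c.card = k}

/-- The height of a finite poset: the number of elements of a longest chain. -/
def posetHeight (Q : FinPartOrd.{0}) : ℕ :=
  sSup {k | ∃ c : Finset ↥Q, IsChain (· ≤ ·) (c : Set ↥Q) ∧ c.card = k}

/-- A finite poset is Newtonian if every element of level `i` covers every element of
level `i - 1`. -/
def Newtonian (Q : FinPartOrd.{0}) : Prop :=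
  ∀ x y : ↥Q, heightEl Q y = heightEl Q x + 1 → x ⋖ y

/-- A finite poset is connected if it is nonempty and any two elements are joined by a
comparability path. -/
def ConnectedPoset (Q : FinPartOrd.{0}) : Prop :=
  Nonempty ↥Q ∧ ∀ x y : ↥Q, Relation.ReflTransGen (fun a b : ↥Q => a ≤ b ∨ b ≤ a) x y

/-- `x` is a maximal element of the subset `W` of `Q`. -/
def IsMaxIn (Q : FinPartOrd.{0}) (W : Finset ↥Q) (x : ↥Q) : Prop :=
  x ∈ W ∧ ∀ y ∈ W, x ≤ y → y = x

/-- `x` is a maximal element of the finite poset `R`. -/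
def IsMaxEl (R : FinPartOrd.{0}) (x : ↥R) : Prop := ∀ y, x ≤ y → y = x

/-- A poset of type 𝒲 : the disjoint union of two connected Newtonian posets that are not
isomorphic, but which only differ in one maximal element (they become isomorphic after the
removal of a suitable maximal element from each). -/
def TypeW (P : FinPartOrd.{0}) : Prop :=
  ∃ W₁ W₂ : Finset ↥P,
    W₁ ∪ W₂ = Finset.univ ∧ Disjoint W₁ W₂ ∧
    (∀ x ∈ W₁, ∀ y ∈ W₂, ¬x ≤ y ∧ ¬y ≤ x) ∧
    ConnectedPoset (subposet P W₁) ∧ ConnectedPoset (subposet P W₂) ∧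
    Newtonian (subposet P W₁) ∧ Newtonian (subposet P W₂) ∧
    ¬Nonempty (↥(subposet P W₁) ≃o ↥(subposet P W₂)) ∧
    ∃ x y, IsMaxIn P W₁ x ∧ IsMaxIn P W₂ y ∧
      Nonempty (↥(subposet P (W₁.erase x)) ≃o ↥(subposet P (W₂.erase y)))

/-- An antichain on `i` elements. -/
def AntichainFin (i : ℕ) : Type := Fin i

instance (i : ℕ) : PartialOrder (AntichainFin i) where
  le x y := x = y
  le_refl _ := rfl
  le_trans a b c h₁ h₂ := show a = c from (show a = b from h₁).trans (show b = c from h₂)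
  le_antisymm _ _ h _ := h

instance (i : ℕ) : Fintype (AntichainFin i) := inferInstanceAs (Fintype (Fin i))
instance (i : ℕ) : Fintype (WithTop (AntichainFin i)) :=
  inferInstanceAs (Fintype (Option (Fin i)))

/-- `Λ_i`: the poset with `i` minimal elements and one maximal element above all of them. -/
def Lambda (i : ℕ) : FinPartOrd.{0} := FinPartOrd.of (WithTop (AntichainFin i))

/-- `k` disjoint copies of a poset `α`. -/
def Copies (k : ℕ) (α : Type) : Type := Fin k × α

instance (k : ℕ) (α : Type) [PartialOrder α] : PartialOrder (Copies k α) where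
  le x y := x.1 = y.1 ∧ x.2 ≤ y.2
  le_refl _ := ⟨rfl, le_refl _⟩
  le_trans _ _ _ h₁ h₂ := ⟨h₁.1.trans h₂.1, le_trans h₁.2 h₂.2⟩
  le_antisymm x y h₁ h₂ := by
    obtain ⟨x₁, x₂⟩ := x
    obtain ⟨y₁, y₂⟩ := y
    obtain ⟨h, h'⟩ := h₁
    cases h
    exact congrArg _ (le_antisymm h' h₂.2)

instance (k : ℕ) (α : Type) [Fintype α] : Fintype (Copies k α) :=
  inferInstanceAs (Fintype (Fin k × α))

/-- `H_ℓ`: the poset whose connected components are `ℓ` copies of `Λ₂` and one copy of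
`Λ_{3(ℓ-1)}`. -/
def Hposet (ℓ : ℕ) : FinPartOrd.{0} :=
  FinPartOrd.of (Copies ℓ (WithTop (AntichainFin 2)) ⊕ WithTop (AntichainFin (3 * (ℓ - 1))))

/-- The poset `P₀` placed above a chain of `i` elements. -/
def withChain (P₀ : FinPartOrd.{0}) (i : ℕ) : FinPartOrd.{0} :=
  FinPartOrd.of (Fin i ⊕ₗ ↥P₀)

/-- The disjoint union of two finite posets. -/
def disjSum (P R : FinPartOrd.{0}) : FinPartOrd.{0} := FinPartOrd.of (↥P ⊕ ↥R)

/-- The poset `P_iR_i`: the disjoint union of `P₀` and `R₀` each placed above a chain of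
`i` elements. -/
def PRposet (P₀ R₀ : FinPartOrd.{0}) (i : ℕ) : FinPartOrd.{0} :=
  disjSum (withChain P₀ i) (withChain R₀ i)

/-- `C(P₀R₀) = |D(P₀)| + |D(R₀)| − |D(P₀) ∩ D(R₀)|`. -/
def CNum (P₀ R₀ : FinPartOrd.{0}) : ℕ :=
  (DAllSet P₀).ncard + (DAllSet R₀).ncard - (DAllSet P₀ ∩ DAllSet R₀).ncard

/-- The vertices of the exchange graph: the downsets of `Q` of size `n`, as actual subsets. -/
def EGVert (n : ℕ) (Q : FinPartOrd.{0}) : Type :=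
  {D : Finset ↥Q // IsDownset Q D ∧ D.card = n}

/-- The exchange graph `G_n(Q)`: two size-`n` downsets are adjacent iff they differ by
exactly one element. -/
def ExchangeGraph (n : ℕ) (Q : FinPartOrd.{0}) : SimpleGraph (EGVert n Q) where
  Adj X Y := (X.1 \ Y.1).card = 1 ∧ (Y.1 \ X.1).card = 1
  symm := ⟨fun X Y h => ⟨h.2, h.1⟩⟩
  loopless := ⟨fun X h => by
    simp only [Finset.sdiff_self, Finset.card_empty] at h
    exact absurd h.1 (by simp)⟩

/-- The downset `D` of `Q`, viewed as a poset, is isomorphic (a "copy of") `P`. -/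
def IsoTo (Q : FinPartOrd.{0}) (D : Finset ↥Q) (P : FinPartOrd.{0}) : Prop :=
  Nonempty (↥(subposet Q D) ≃o ↥P)

/-- A path `A :: M ++ [C]` in the exchange graph `G_n(Q)` whose first vertex is a copy of
`Pa`, whose last vertex is a copy of `Pb`, and all of whose internal vertices are copies of
`Pmid`. -/
def SpecialPath (n : ℕ) (Q : FinPartOrd.{0}) (Pa Pmid Pb : FinPartOrd.{0})
    (A : EGVert n Q) (M : List (EGVert n Q)) (C : EGVert n Q) : Prop :=
  List.Chain' (ExchangeGraph n Q).Adj (A :: M ++ [C]) ∧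
    IsoTo Q A.1 Pa ∧ IsoTo Q C.1 Pb ∧ ∀ v ∈ M, IsoTo Q v.1 Pmid

/-- `T` is an antichain in `Q`. -/
def IsAntichainIn (Q : FinPartOrd.{0}) (T : Finset ↥Q) : Prop :=
  ∀ x ∈ T, ∀ y ∈ T, x ≤ y → x = y

/-- The possible shapes of `A \ X` and `C \ X`: an antichain possibly together with a single
element below all of it and/or a single element above all of it, or a two-element chain
together with one incomparable element. -/
def GoodForm (Q : FinPartOrd.{0}) (S : Finset ↥Q) : Prop :=
  (∃ T : Finset ↥Q, IsAntichainIn Q T ∧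
    (S = T ∨
      (∃ b, b ∉ T ∧ S = insert b T ∧ ∀ x ∈ T, b < x) ∨
      (∃ t, t ∉ T ∧ S = insert t T ∧ ∀ x ∈ T, x < t) ∨
      (∃ b t, b ∉ T ∧ t ∉ T ∧ b ≠ t ∧ S = insert b (insert t T) ∧
        (∀ x ∈ T, b < x) ∧ ∀ x ∈ T, x < t))) ∨
  (∃ x y z : ↥Q, S = {x, y, z} ∧ x ≠ y ∧ x ≠ z ∧ y ≠ z ∧ x < y ∧
    ¬x ≤ z ∧ ¬z ≤ x ∧ ¬y ≤ z ∧ ¬z ≤ y)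

namespace NLW

abbrev CopyT : Type := WithTop (AntichainFin 1)

abbrev HCar (l B : ℕ) : Type := Copies l CopyT ⊕ WithTop (AntichainFin B)

def HH (l B : ℕ) : FinPartOrd.{0} := FinPartOrd.of (HCar l B)

lemma wt_le_iff {i : ℕ} (a b : WithTop (AntichainFin i)) : a ≤ b ↔ a = b ∨ b = ⊤ := by
  constructor
  · intro h
    cases b with
    | top => exact Or.inr rfl
    | coe b' =>
      cases a with
      | top => simp at h
      | coe a' => exact Or.inl (by rw [WithTop.coe_le_coe] at h; exact congrArg _ h)
  · rintro (rfl | rfl)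
    · exact le_rfl
    · exact le_top

lemma copies_le_iff {k : ℕ} {α : Type} [PartialOrder α] (p q : Copies k α) :
    p ≤ q ↔ p.1 = q.1 ∧ p.2 ≤ q.2 := Iff.rfl

example (l B : ℕ) : ↥(HH l B) = HCar l B := rfl

def topOf {l B : ℕ} : HCar l B → HCar l B
  | Sum.inl (i, _) => Sum.inl (i, ⊤)
  | Sum.inr _ => Sum.inr ⊤

lemma lt_det {l B : ℕ} {a b : HCar l B} (h : a < b) : b = topOf a := by
  obtain ⟨hle, hne⟩ := lt_iff_le_and_ne.mp h
  cases a with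
  | inl p =>
    cases b with
    | inl q =>
      rw [Sum.inl_le_inl_iff, copies_le_iff] at hle
      obtain ⟨h1, h2⟩ := hle
      obtain ⟨i, y⟩ := p
      obtain ⟨i', y'⟩ := q
      cases h1
      rcases (wt_le_iff _ _).mp h2 with rfl | rfl
      · exact absurd rfl hne
      · rfl
    | inr q => exact absurd hle (fun hh => Sum.not_inl_le_inr hh)
  | inr p =>
    cases b with
    | inl q => exact absurd hle (fun hh => Sum.not_inr_le_inl hh)
    | inr q =>
      rw [Sum.inr_le_inr_iff] at hle
      rcases (wt_le_iff _ _).mp hle with rfl | rfl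
      · exact absurd rfl hne
      · rfl

lemma upper_unique {l B : ℕ} {a b1 b2 : HCar l B} (h1 : a < b1) (h2 : a < b2) : b1 = b2 := by
  rw [lt_det h1, lt_det h2]

end NLW

namespace NLW2

lemma subposet_le_iff (Q : FinPartOrd.{0}) (D : Finset ↥Q) (a b : ↥(subposet Q D)) :
    a ≤ b ↔ a.1 ≤ b.1 := Iff.rfl

lemma cls_eq_iff {P R : FinPartOrd.{0}} : cls P = cls R ↔ Nonempty (↥P ≃o ↥R) :=
  ⟨fun h => Quotient.exact h, fun h => Quotient.sound h⟩

lemma usize_cls (P : FinPartOrd.{0}) : usize (cls P) = size P := rfl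

lemma size_subposet (Q : FinPartOrd.{0}) (D : Finset ↥Q) : size (subposet Q D) = D.card :=
  Fintype.card_coe D

lemma dset_finite (n : ℕ) (Q : FinPartOrd.{0}) : (DSet n Q).Finite := by
  have h : DSet n Q ⊆ (fun D : Finset ↥Q => cls (subposet Q D)) '' Set.univ := by
    rintro c ⟨D, _, _, rfl⟩; exact ⟨D, trivial, rfl⟩
  exact Set.Finite.subset (Set.finite_univ.image _) h

def pd (Q : FinPartOrd.{0}) (x : ↥Q) : Finset ↥Q := Finset.univ.filter (· ≤ x)

lemma mem_pd {Q : FinPartOrd.{0}} {x y : ↥Q} : y ∈ pd Q x ↔ y ≤ x := by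
  simp [pd]

lemma pd_transfer {Q R : FinPartOrd.{0}} {G : Finset ↥R} {W : Finset ↥Q}
    (hW : IsDownset Q W)
    (χ : ↥(subposet R G) ≃o ↥(subposet Q W)) (g : ↥R) (hg : g ∈ G) :
    pd Q (χ ⟨g, hg⟩).1 =
      Finset.image (fun z : ↥(subposet R G) => (χ z).1)
        (Finset.univ.filter (fun z : ↥(subposet R G) => z.1 ≤ g)) := by
  ext y
  simp only [mem_pd, Finset.mem_image, Finset.mem_filter, Finset.mem_univ, true_and]
  constructor
  · intro hy
    have hyW : y ∈ W := hW (χ ⟨g, hg⟩).2 hy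
    refine ⟨χ.symm ⟨y, hyW⟩, ?_, ?_⟩
    · have : (⟨y, hyW⟩ : ↥(subposet Q W)) ≤ χ ⟨g, hg⟩ := hy
      have := χ.symm.monotone this
      rw [χ.symm_apply_apply (⟨g, hg⟩ : ↥(subposet R G))] at this
      exact this
    · exact congrArg Subtype.val (χ.apply_symm_apply (⟨y, hyW⟩ : ↥(subposet Q W)))
  · rintro ⟨z, hz, rfl⟩
    exact χ.monotone hz

lemma pd_transfer_card {Q R : FinPartOrd.{0}} {G : Finset ↥R} {W : Finset ↥Q}
    (hW : IsDownset Q W)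
    (χ : ↥(subposet R G) ≃o ↥(subposet Q W)) (g : ↥R) (hg : g ∈ G) :
    (pd Q (χ ⟨g, hg⟩).1).card = (G.filter (fun z => z ≤ g)).card := by
  rw [pd_transfer hW χ g hg]
  rw [Finset.card_image_of_injective _
    (show Function.Injective (fun z : ↥(subposet R G) => (χ z).1) from
      fun a b h => χ.toEquiv.injective (Subtype.ext h))]
  apply Finset.card_bij (fun z _ => z.1)
  · intro a ha
    simp only [Finset.mem_filter, Finset.mem_univ, true_and] at ha ⊢
    exact ⟨a.2, ha⟩
  · intro a _ b _ h; exact Subtype.ext h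
  · intro b hb
    simp only [Finset.mem_filter] at hb
    exact ⟨⟨b, hb.1⟩, Finset.mem_filter.mpr ⟨Finset.mem_univ _, hb.2⟩, rfl⟩

end NLW2

namespace NLW3
open NLW NLW2

def ModelU (j f : ℕ) : FinPartOrd.{0} := FinPartOrd.of (Copies j CopyT ⊕ AntichainFin f)

def ModelFlag (B : ℕ) : FinPartOrd.{0} :=
  FinPartOrd.of (WithTop (AntichainFin B) ⊕ AntichainFin 1)

variable {l B : ℕ}

lemma card_wt (i : ℕ) : Fintype.card (WithTop (AntichainFin i)) = i + 1 := by
  rw [show Fintype.card (WithTop (AntichainFin i)) = Fintype.card (Option (Fin i)) from rfl]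
  simp

lemma card_copyT : Fintype.card CopyT = 2 := card_wt 1

def bigAll (l B : ℕ) : Finset ↥(HH l B) :=
  Finset.univ.image (Sum.inr : WithTop (AntichainFin B) → HCar l B)

lemma mem_bigAll {z : ↥(HH l B)} : z ∈ bigAll l B ↔ ∃ w, z = Sum.inr w := by
  constructor
  · intro hz
    obtain ⟨w, -, hw⟩ := Finset.mem_image.mp hz
    exact ⟨w, hw.symm⟩
  · rintro ⟨w, rfl⟩
    exact Finset.mem_image.mpr ⟨w, Finset.mem_univ _, rfl⟩

lemma card_bigAll : (bigAll l B).card = B + 1 := by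
  rw [show (bigAll l B).card = _ from Finset.card_image_of_injective _ Sum.inr_injective,
    Finset.card_univ, card_wt]

lemma bigAll_subset {D : Finset ↥(HH l B)} (hD : IsDownset (HH l B) D)
    (htop : Sum.inr ⊤ ∈ D) : bigAll l B ⊆ D := by
  intro z hz
  obtain ⟨w, rfl⟩ := mem_bigAll.mp hz
  exact hD htop (Sum.inr_le_inr_iff.mpr le_top)

lemma classify_flag {D : Finset ↥(HH l B)} (hD : IsDownset (HH l B) D)
    (hB : B + 2 = 2 * l) (hcard : D.card = 2 * l) (htop : Sum.inr ⊤ ∈ D) :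
    Nonempty (↥(subposet (HH l B) D) ≃o ↥(ModelFlag B)) := by
  have hsub := bigAll_subset hD htop
  have hEcard : (D \ bigAll l B).card = 1 := by
    rw [Finset.card_sdiff_of_subset hsub, hcard, card_bigAll]; omega
  obtain ⟨g0, hg0⟩ := Finset.card_eq_one.mp hEcard
  have hg0mem : g0 ∈ D ∧ g0 ∉ bigAll l B := by
    have : g0 ∈ D \ bigAll l B := hg0 ▸ Finset.mem_singleton_self g0
    exact Finset.mem_sdiff.mp this
  have hmemE : ∀ z, z ∈ D → z ∉ bigAll l B → z = g0 := by
    intro z h1 h2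
    have : z ∈ D \ bigAll l B := Finset.mem_sdiff.mpr ⟨h1, h2⟩
    rw [hg0] at this
    exact Finset.mem_singleton.mp this
  obtain ⟨⟨i0, y0⟩, hg0eq⟩ : ∃ p, g0 = Sum.inl p := by
    cases hz : g0 with
    | inl p => exact ⟨p, rfl⟩
    | inr w => exact absurd (mem_bigAll.mpr ⟨w, hz⟩) hg0mem.2
  -- define the iso
  let F : ↥(ModelFlag B) → ↥(subposet (HH l B) D) := fun m =>
    match m with
    | Sum.inl w => ⟨Sum.inr w, hsub (mem_bigAll.mpr ⟨w, rfl⟩)⟩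
    | Sum.inr _ => ⟨g0, hg0mem.1⟩
  have hFbij : Function.Bijective F := by
    constructor
    · rintro (w | a) (w' | a') h
      · have : (Sum.inr w : HCar l B) = Sum.inr w' := congrArg Subtype.val h
        rw [Sum.inr_injective this]
      · have : (Sum.inr w : HCar l B) = g0 := congrArg Subtype.val h
        rw [hg0eq] at this; exact absurd this (by simp)
      · have : g0 = (Sum.inr w' : HCar l B) := congrArg Subtype.val h
        rw [hg0eq] at this; exact absurd this (by simp)
      · have : a = a' := Subsingleton.elim (α := Fin 1) a a'
        rw [this]
    · rintro ⟨z, hz⟩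
      by_cases hzb : z ∈ bigAll l B
      · obtain ⟨w, rfl⟩ := mem_bigAll.mp hzb
        exact ⟨Sum.inl w, rfl⟩
      · refine ⟨Sum.inr ⟨0, Nat.one_pos⟩, ?_⟩
        exact Subtype.ext (hmemE z hz hzb).symm
  refine ⟨OrderIso.symm { toEquiv := Equiv.ofBijective F hFbij, map_rel_iff' := ?_ }⟩
  rintro (w | a) (w' | a')
  · constructor
    · intro h
      have : (Sum.inr w : HCar l B) ≤ Sum.inr w' := h
      exact Sum.inl_le_inl_iff.mpr (Sum.inr_le_inr_iff.mp this)
    · intro h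
      have : w ≤ w' := Sum.inl_le_inl_iff.mp h
      exact show (Sum.inr w : HCar l B) ≤ Sum.inr w' from Sum.inr_le_inr_iff.mpr this
  · refine iff_of_false ?_ (fun h => Sum.not_inl_le_inr h)
    intro h
    have h2 : (Sum.inr w : HCar l B) ≤ g0 := h
    rw [hg0eq] at h2
    exact Sum.not_inr_le_inl h2
  · refine iff_of_false ?_ (fun h => Sum.not_inr_le_inl h)
    intro h
    have h2 : g0 ≤ (Sum.inr w' : HCar l B) := h
    rw [hg0eq] at h2
    exact Sum.not_inl_le_inr h2
  · have : a = a' := Subsingleton.elim (α := Fin 1) a a'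
    subst this
    exact iff_of_true le_rfl le_rfl

end NLW3

namespace NLW4
open NLW NLW2 NLW3

variable {l B : ℕ}

lemma classify_unflag {D : Finset ↥(HH l B)} (hD : IsDownset (HH l B) D)
    (hcard : D.card = 2 * l) (htop : (Sum.inr ⊤ : HCar l B) ∉ D) :
    ∃ j ≤ l, Nonempty (↥(subposet (HH l B) D) ≃o ↥(ModelU j (2 * l - 2 * j))) := by
  classical
  set Full : Finset (Fin l) := Finset.univ.filter
    (fun i => (Sum.inl (i, (⊤ : CopyT)) : HCar l B) ∈ D) with hFull
  set j := Full.card with hj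
  have hjl : j ≤ l := by
    calc j ≤ (Finset.univ : Finset (Fin l)).card :=
          Finset.card_le_card (Finset.filter_subset _ _)
      _ = l := by simp
  have memD_of_full : ∀ i ∈ Full, ∀ y : CopyT, (Sum.inl (i, y) : HCar l B) ∈ D := by
    intro i hi y
    have hiD : (Sum.inl (i, (⊤ : CopyT)) : HCar l B) ∈ D := (Finset.mem_filter.mp hi).2
    exact hD hiD (Sum.inl_le_inl_iff.mpr ⟨rfl, le_top⟩)
  set FullElts : Finset ↥(HH l B) :=
    (Full ×ˢ (Finset.univ : Finset CopyT)).image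
      (Sum.inl : Copies l CopyT → HCar l B) with hFE
  have mem_FE : ∀ z : ↥(HH l B),
      z ∈ FullElts ↔ ∃ i ∈ Full, ∃ y : CopyT, z = Sum.inl (i, y) := by
    intro z
    erw [hFE, Finset.mem_image]
    constructor
    · rintro ⟨⟨i, y⟩, hi, rfl⟩; exact ⟨i, (Finset.mem_product.mp hi).1, y, rfl⟩
    · rintro ⟨i, hi, y, rfl⟩
      exact ⟨(i, y), Finset.mem_product.mpr ⟨hi, Finset.mem_univ _⟩, rfl⟩
  have hFEsub : FullElts ⊆ D := by
    intro z hz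
    obtain ⟨i, hi, y, rfl⟩ := (mem_FE z).mp hz
    exact memD_of_full i hi y
  have hFEcard : FullElts.card = 2 * j := by
    have h1 : FullElts.card = (Full ×ˢ (Finset.univ : Finset CopyT)).card :=
      Finset.card_image_of_injective _ Sum.inl_injective
    rw [h1, Finset.card_product, Finset.card_univ, card_copyT]
    ring
  set Free := D \ FullElts with hFr
  have hFrcard : Free.card = 2 * l - 2 * j := by
    rw [hFr, Finset.card_sdiff_of_subset hFEsub, hcard, hFEcard]
  have free_not_FE : ∀ z ∈ Free, z ∉ FullElts := fun z hz => (Finset.mem_sdiff.mp hz).2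
  have free_D : ∀ z ∈ Free, z ∈ D := fun z hz => (Finset.mem_sdiff.mp hz).1
  have free_incomp : ∀ z ∈ Free, ∀ z' ∈ Free, z ≤ z' → z = z' := by
    intro z hz z' hz' hle
    by_contra hne
    have hlt : z < z' := lt_of_le_of_ne hle hne
    have hz'eq := lt_det hlt
    cases z with
    | inl p =>
      obtain ⟨i, y⟩ := p
      have hz'eq2 : z' = Sum.inl (i, (⊤ : CopyT)) := hz'eq
      have hiFull : i ∈ Full := by
        rw [hFull]
        refine Finset.mem_filter.mpr ⟨Finset.mem_univ _, ?_⟩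
        exact hz'eq2 ▸ free_D z' hz'
      exact free_not_FE z' hz' ((mem_FE z').mpr ⟨i, hiFull, ⊤, hz'eq2⟩)
    | inr w =>
      have hz'eq2 : z' = Sum.inr ⊤ := hz'eq
      exact htop (hz'eq2 ▸ free_D z' hz')
  -- equivs
  let eF : Fin j → Fin l := fun a => ((Full.equivFin.symm a) : ↥Full).1
  have eF_mem : ∀ a, eF a ∈ Full := fun a => (Full.equivFin.symm a).2
  have eF_inj : Function.Injective eF := by
    intro a b h
    have h2 : Full.equivFin.symm a = Full.equivFin.symm b := Subtype.ext h
    exact Full.equivFin.symm.injective h2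
  let e2 : ↥Free ≃ Fin (2 * l - 2 * j) := Free.equivFin.trans (finCongr hFrcard)
  let F : ↥(ModelU j (2 * l - 2 * j)) → ↥(subposet (HH l B) D) := fun m =>
    match m with
    | Sum.inl p => ⟨Sum.inl (eF p.1, p.2), memD_of_full _ (eF_mem p.1) p.2⟩
    | Sum.inr b => ⟨(e2.symm b).1, free_D _ (e2.symm b).2⟩
  have hFbij : Function.Bijective F := by
    constructor
    · rintro (⟨a, y⟩ | b) (⟨a', y'⟩ | b') h
      · have hval : (Sum.inl (eF a, y) : HCar l B) = Sum.inl (eF a', y') :=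
          congrArg Subtype.val h
        have hp : (eF a, y) = (eF a', y') := Sum.inl_injective hval
        have h1 : eF a = eF a' := congrArg Prod.fst hp
        have h2 : y = y' := congrArg Prod.snd hp
        rw [eF_inj h1, h2]
      · exfalso
        have hval : (Sum.inl (eF a, y) : HCar l B) = (e2.symm b').1 :=
          congrArg Subtype.val h
        exact free_not_FE _ (e2.symm b').2 ((mem_FE _).mpr ⟨eF a, eF_mem a, y, hval.symm⟩)
      · exfalso
        have hval : (e2.symm b).1 = (Sum.inl (eF a', y') : HCar l B) :=
          congrArg Subtype.val h
        exact free_not_FE _ (e2.symm b).2 ((mem_FE _).mpr ⟨eF a', eF_mem a', y', hval⟩)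
      · have hv := congrArg Subtype.val h
        have : e2.symm b = e2.symm b' := Subtype.ext hv
        rw [e2.symm.injective this]
    · rintro ⟨z, hz⟩
      by_cases hzF : z ∈ FullElts
      · obtain ⟨i, hi, y, rfl⟩ := (mem_FE z).mp hzF
        refine ⟨Sum.inl (Full.equivFin ⟨i, hi⟩, y), ?_⟩
        have heq : eF (Full.equivFin ⟨i, hi⟩) = i := by
          show ((Full.equivFin.symm (Full.equivFin ⟨i, hi⟩)) : ↥Full).1 = i
          rw [Equiv.symm_apply_apply]
        refine Subtype.ext ?_
        show (Sum.inl (eF (Full.equivFin ⟨i, hi⟩), y) : HCar l B) = Sum.inl (i, y)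
        rw [heq]; rfl
      · have hzFree : z ∈ Free := Finset.mem_sdiff.mpr ⟨hz, hzF⟩
        refine ⟨Sum.inr (e2 ⟨z, hzFree⟩), ?_⟩
        exact Subtype.ext (by show ((e2.symm (e2 ⟨z, hzFree⟩)) : ↥Free).1 = z; rw [Equiv.symm_apply_apply])
  refine ⟨j, hjl, ⟨OrderIso.symm { toEquiv := Equiv.ofBijective F hFbij, map_rel_iff' := ?_ }⟩⟩
  rintro (⟨a, y⟩ | b) (⟨a', y'⟩ | b')
  · constructor
    · intro h
      have h2 : (Sum.inl (eF a, y) : HCar l B) ≤ Sum.inl (eF a', y') := h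
      obtain ⟨h3, h4⟩ := (copies_le_iff _ _).mp (Sum.inl_le_inl_iff.mp h2)
      exact Sum.inl_le_inl_iff.mpr ((copies_le_iff _ _).mpr ⟨eF_inj h3, h4⟩)
    · intro h
      obtain ⟨h3, h4⟩ := (copies_le_iff _ _).mp (Sum.inl_le_inl_iff.mp h)
      have h5 : eF a = eF a' := congrArg eF h3
      exact show (Sum.inl (eF a, y) : HCar l B) ≤ Sum.inl (eF a', y') from
        Sum.inl_le_inl_iff.mpr ((copies_le_iff _ _).mpr ⟨h5, h4⟩)
  · refine iff_of_false ?_ (fun h => Sum.not_inl_le_inr h)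
    intro h
    have h2 : (Sum.inl (eF a, y) : HCar l B) ≤ (e2.symm b').1 := h
    rcases eq_or_lt_of_le h2 with heq | hlt
    · exact free_not_FE _ (e2.symm b').2 ((mem_FE _).mpr ⟨eF a, eF_mem a, y, heq.symm⟩)
    · have h3 : (e2.symm b').1 = Sum.inl (eF a, (⊤ : CopyT)) := lt_det hlt
      exact free_not_FE _ (e2.symm b').2 ((mem_FE _).mpr ⟨eF a, eF_mem a, ⊤, h3⟩)
  · refine iff_of_false ?_ (fun h => Sum.not_inr_le_inl h)
    intro h
    have h2 : (e2.symm b).1 ≤ (Sum.inl (eF a', y') : HCar l B) := h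
    rcases eq_or_lt_of_le h2 with heq | hlt
    · exact free_not_FE _ (e2.symm b).2 ((mem_FE _).mpr ⟨eF a', eF_mem a', y', heq⟩)
    · have h3 : (Sum.inl (eF a', y') : HCar l B) = topOf (e2.symm b).1 := lt_det hlt
      cases hv : ((e2.symm b).1 : HCar l B) with
      | inl pv =>
        obtain ⟨iv, yv⟩ := pv
        rw [hv] at h3
        have h4 : (Sum.inl (eF a', y') : HCar l B) = Sum.inl (iv, (⊤ : CopyT)) := h3
        have h5 : eF a' = iv := by
          have := Sum.inl_injective h4
          exact congrArg Prod.fst this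
        exact free_not_FE _ (e2.symm b).2
          ((mem_FE _).mpr ⟨iv, h5 ▸ eF_mem a', yv, hv⟩)
      | inr wv =>
        rw [hv] at h3
        exact absurd h3 (by simp [topOf])
  · constructor
    · intro h
      have h2 : (e2.symm b).1 ≤ (e2.symm b').1 := h
      have h3 := free_incomp _ (e2.symm b).2 _ (e2.symm b').2 h2
      have h4 : e2.symm b = e2.symm b' := Subtype.ext h3
      have h5 : b = b' := e2.symm.injective h4
      exact h5 ▸ le_rfl
    · intro h
      have h5 : b = b' := Sum.inr_le_inr_iff.mp h
      exact h5 ▸ le_rfl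

end NLW4

namespace NLW5
open NLW NLW2 NLW3

variable {l B : ℕ}

lemma inl_le_inl' {l B : ℕ} {p q : Copies l CopyT} :
    (Sum.inl p : HCar l B) ≤ Sum.inl q ↔ p.1 = q.1 ∧ p.2 ≤ q.2 := by
  constructor
  · intro h
    exact (copies_le_iff _ _).mp (Sum.inl_le_inl_iff.mp h)
  · intro h
    exact Sum.inl_le_inl_iff.mpr ((copies_le_iff _ _).mpr h)

lemma inr_le_inr' {l B : ℕ} {w w' : WithTop (AntichainFin B)} :
    (Sum.inr w : HCar l B) ≤ Sum.inr w' ↔ w ≤ w' := by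
  constructor
  · intro h
    exact Sum.inr_le_inr_iff.mp h
  · intro h
    exact Sum.inr_le_inr_iff.mpr h

lemma not_inl_le_inr' {p : Copies l CopyT} {w : WithTop (AntichainFin B)} :
    ¬ ((Sum.inl p : HCar l B) ≤ Sum.inr w) := by
  intro h
  exact Sum.not_inl_le_inr h

lemma not_inr_le_inl' {p : Copies l CopyT} {w : WithTop (AntichainFin B)} :
    ¬ ((Sum.inr w : HCar l B) ≤ Sum.inl p) := by
  intro h
  exact Sum.not_inr_le_inl h

def z0 : AntichainFin 1 := ⟨0, Nat.one_pos⟩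

def copiesAll (l B : ℕ) : Finset ↥(HH l B) :=
  Finset.univ.image (Sum.inl : Copies l CopyT → HCar l B)

lemma mem_copiesAll {z : ↥(HH l B)} : z ∈ copiesAll l B ↔ ∃ p, z = Sum.inl p := by
  constructor
  · intro hz
    obtain ⟨p, -, hp⟩ := Finset.mem_image.mp hz
    exact ⟨p, hp.symm⟩
  · rintro ⟨p, rfl⟩
    exact Finset.mem_image.mpr ⟨p, Finset.mem_univ _, rfl⟩

lemma card_copiesAll : (copiesAll l B).card = 2 * l := by
  rw [show (copiesAll l B).card = (Finset.univ : Finset (Copies l CopyT)).card from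
      Finset.card_image_of_injective _ Sum.inl_injective, Finset.card_univ]
  rw [show Fintype.card (Copies l CopyT) = Fintype.card (Fin l × CopyT) from rfl]
  rw [Fintype.card_prod, Fintype.card_fin, card_copyT]
  ring

lemma copiesAll_down : IsDownset (HH l B) (copiesAll l B) := by
  intro a b ha hba
  obtain ⟨p, rfl⟩ := mem_copiesAll.mp ha
  cases b with
  | inl q => exact mem_copiesAll.mpr ⟨q, rfl⟩
  | inr w => exact absurd hba (fun h => Sum.not_inr_le_inl h)

lemma inl_notmem_bigAll (p : Copies l CopyT) : (Sum.inl p : HCar l B) ∉ bigAll l B := by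
  intro h
  obtain ⟨w, hw⟩ := mem_bigAll.mp h
  cases hw

def GF (l B : ℕ) (hl : 1 ≤ l) : Finset ↥(HH l B) :=
  Finset.cons (Sum.inl (⟨0, hl⟩, (z0 : CopyT))) (bigAll l B) (inl_notmem_bigAll _)

lemma mem_GF {hl : 1 ≤ l} {z : ↥(HH l B)} :
    z ∈ GF l B hl ↔ z = Sum.inl (⟨0, hl⟩, (z0 : CopyT)) ∨ z ∈ bigAll l B :=
  Finset.mem_cons

lemma GF_down (hl : 1 ≤ l) : IsDownset (HH l B) (GF l B hl) := by
  intro a b ha hba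
  rcases mem_GF.mp ha with rfl | ha2
  · cases b with
    | inl q =>
      obtain ⟨h3, h4⟩ := inl_le_inl'.mp hba
      rcases (wt_le_iff _ _).mp h4 with h5 | h5
      · refine mem_GF.mpr (Or.inl ?_)
        obtain ⟨q1, q2⟩ := q
        cases h3; cases h5; rfl
      · exact absurd h5 WithTop.coe_ne_top
    | inr w => exact absurd hba (fun h => Sum.not_inr_le_inl h)
  · obtain ⟨w, rfl⟩ := mem_bigAll.mp ha2
    cases b with
    | inl q => exact absurd hba (fun h => Sum.not_inl_le_inr h)
    | inr w' => exact mem_GF.mpr (Or.inr (mem_bigAll.mpr ⟨w', rfl⟩))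

lemma GF_card (hl : 1 ≤ l) : (GF l B hl).card = B + 2 := by
  erw [GF, Finset.card_cons, card_bigAll]

lemma inr_top_mem_GF (hl : 1 ≤ l) : (Sum.inr ⊤ : HCar l B) ∈ GF l B hl :=
  mem_GF.mpr (Or.inr (mem_bigAll.mpr ⟨⊤, rfl⟩))

lemma filt_GF (hl : 1 ≤ l) :
    (GF l B hl).filter (fun z => z ≤ (Sum.inr ⊤ : HCar l B)) = bigAll l B := by
  ext z
  erw [Finset.mem_filter]
  constructor
  · rintro ⟨hz, hle⟩
    rcases mem_GF.mp hz with rfl | h2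
    · exact absurd hle not_inl_le_inr'
    · exact h2
  · intro hz
    obtain ⟨w, rfl⟩ := mem_bigAll.mp hz
    exact ⟨mem_GF.mpr (Or.inr hz), inr_le_inr'.mpr le_top⟩

lemma inl_mem_copiesAll (p : Copies l CopyT) : (Sum.inl p : HCar l B) ∈ copiesAll l B :=
  mem_copiesAll.mpr ⟨p, rfl⟩

lemma copy_bot_ne_top (i : Fin l) :
    (Sum.inl (i, (z0 : CopyT)) : HCar l B) ≠ Sum.inl (i, (⊤ : CopyT)) := by
  intro h
  have h3 := Sum.inl_injective h
  have h4 : (z0 : CopyT) = ⊤ := congrArg Prod.snd h3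
  exact WithTop.coe_ne_top h4

def pairT (l B : ℕ) (i : Fin l) : Finset ↥(HH l B) :=
  Finset.cons (Sum.inl (i, (z0 : CopyT))) {Sum.inl (i, (⊤ : CopyT))}
    (by intro h; exact copy_bot_ne_top i (Finset.mem_singleton.mp h))

lemma mem_pairT {i : Fin l} {z : ↥(HH l B)} :
    z ∈ pairT l B i ↔ z = Sum.inl (i, (z0 : CopyT)) ∨ z = Sum.inl (i, (⊤ : CopyT)) := by
  erw [pairT, Finset.mem_cons, Finset.mem_singleton]; exact Iff.rfl

lemma filt_copies (i : Fin l) :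
    (copiesAll l B).filter (fun z => z ≤ (Sum.inl (i, (⊤ : CopyT)) : HCar l B)) =
      pairT l B i := by
  ext z
  erw [Finset.mem_filter, mem_pairT]
  constructor
  · rintro ⟨hz, hle⟩
    obtain ⟨⟨i', y⟩, rfl⟩ := mem_copiesAll.mp hz
    obtain ⟨h3, h4⟩ := inl_le_inl'.mp hle
    cases h3
    cases y with
    | none => exact Or.inr rfl
    | some v =>
      have hv : v = z0 := Subsingleton.elim (α := Fin 1) v z0
      cases hv
      exact Or.inl rfl
  · rintro (rfl | rfl)
    · exact ⟨inl_mem_copiesAll _, inl_le_inl'.mpr ⟨rfl, le_top⟩⟩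
    · exact ⟨inl_mem_copiesAll _, le_rfl⟩

lemma card_filt_copies (i : Fin l) :
    ((copiesAll l B).filter (fun z => z ≤ (Sum.inl (i, (⊤ : CopyT)) : HCar l B))).card = 2 := by
  erw [filt_copies, pairT, Finset.card_cons, Finset.card_singleton]

end NLW5

namespace NLW6
open NLW NLW2 NLW3 NLW5

lemma exists_inr_of_le_inr {l B : ℕ} {a : HCar l B} {w : WithTop (AntichainFin B)}
    (h : a ≤ Sum.inr w) : ∃ u, a = Sum.inr u := by
  cases a with
  | inl p => exact absurd h not_inl_le_inr'
  | inr u => exact ⟨u, rfl⟩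

theorem size_lb {l B : ℕ} (hl : 2 ≤ l) (hB2 : 2 ≤ B) (hB : B + 2 = 2 * l)
    (Q : FinPartOrd.{0}) (hW : DSet (2 * l) Q = DSet (2 * l) (HH l B)) :
    B + 1 + 2 * l ≤ size Q := by
  have hl1 : 1 ≤ l := by omega
  -- the Λ_B ⊔ A₁ shaped downset of Q
  have hGFmem : cls (subposet (HH l B) (GF l B hl1)) ∈ DSet (2 * l) Q := by
    rw [hW]
    exact ⟨GF l B hl1, GF_down hl1, by rw [GF_card]; omega, rfl⟩
  obtain ⟨FQ, hFQd, hFQc, hFQcls⟩ := hGFmem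
  obtain ⟨χF⟩ := cls_eq_iff.mp hFQcls
  set ψ := χF.symm with hψ
  set x : ↥Q := (ψ ⟨Sum.inr ⊤, inr_top_mem_GF hl1⟩).1 with hx
  have hpdx : (pd Q x).card = B + 1 := by
    have h1 := pd_transfer_card hFQd ψ _ (inr_top_mem_GF hl1)
    have h2 : ((GF l B hl1).filter (fun z => z ≤ (Sum.inr ⊤ : HCar l B))).card = B + 1 := by
      rw [filt_GF]; exact card_bigAll
    exact h1.trans h2
  have hmin : ∀ y : ↥Q, y ≤ x → y ≠ x → ∀ w : ↥Q, w ≤ y → w = y := by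
    intro y hyx hyne w hwy
    have hyF : y ∈ FQ := hFQd (ψ ⟨Sum.inr ⊤, inr_top_mem_GF hl1⟩).2 hyx
    have hwF : w ∈ FQ := hFQd hyF hwy
    have h1 : (⟨y, hyF⟩ : ↥(subposet Q FQ)) ≤ ψ ⟨Sum.inr ⊤, inr_top_mem_GF hl1⟩ := hyx
    have h2 := ψ.symm.monotone h1
    rw [ψ.symm_apply_apply (⟨Sum.inr ⊤, inr_top_mem_GF hl1⟩ : ↥(subposet (HH l B) (GF l B hl1)))] at h2
    obtain ⟨w0, hw0⟩ := exists_inr_of_le_inr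
      (show (ψ.symm ⟨y, hyF⟩).1 ≤ Sum.inr ⊤ from h2)
    cases w0 with
    | top =>
      exfalso
      have h3 : ψ.symm ⟨y, hyF⟩ = ⟨Sum.inr ⊤, inr_top_mem_GF hl1⟩ := Subtype.ext hw0
      have h4 := congrArg ψ h3
      rw [ψ.apply_symm_apply (⟨y, hyF⟩ : ↥(subposet Q FQ))] at h4
      exact hyne (Subtype.ext_iff.mp h4)
    | coe v0 =>
      have h2w := ψ.symm.monotone (show (⟨w, hwF⟩ : ↥(subposet Q FQ)) ≤ ⟨y, hyF⟩ from hwy)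
      have hv : (ψ.symm ⟨w, hwF⟩).1 ≤ Sum.inr (v0 : WithTop (AntichainFin B)) := by
        have h5 : (ψ.symm ⟨w, hwF⟩).1 ≤ (ψ.symm ⟨y, hyF⟩).1 := h2w
        rwa [hw0] at h5
      obtain ⟨u, hu⟩ := exists_inr_of_le_inr hv
      rw [hu] at hv
      have h5 := inr_le_inr'.mp hv
      rcases (wt_le_iff _ _).mp h5 with h6 | h6
      · have h7 : ψ.symm ⟨w, hwF⟩ = ψ.symm ⟨y, hyF⟩ :=
          Subtype.ext (by rw [hu, hw0, h6])
        have h8 := ψ.symm.injective h7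
        exact Subtype.ext_iff.mp h8
      · exact absurd h6 WithTop.coe_ne_top
  -- the C₂^ℓ shaped downset of Q
  have hCmem : cls (subposet (HH l B) (copiesAll l B)) ∈ DSet (2 * l) Q := by
    rw [hW]
    exact ⟨copiesAll l B, copiesAll_down, card_copiesAll, rfl⟩
  obtain ⟨DQ, hDQd, hDQc, hDQcls⟩ := hCmem
  obtain ⟨χD⟩ := cls_eq_iff.mp hDQcls
  set φ := χD.symm with hφ
  set t : Fin l → ↥Q :=
    fun i => (φ ⟨Sum.inl (i, (⊤ : CopyT)), inl_mem_copiesAll _⟩).1 with ht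
  set b : Fin l → ↥Q :=
    fun i => (φ ⟨Sum.inl (i, (z0 : CopyT)), inl_mem_copiesAll _⟩).1 with hb
  have hpdt_card : ∀ i, (pd Q (t i)).card = 2 := by
    intro i
    have h1 := pd_transfer_card hDQd φ _
      (inl_mem_copiesAll (l := l) (B := B) (i, (⊤ : CopyT)))
    have h2 := card_filt_copies (l := l) (B := B) i
    exact h1.trans h2
  have hbt_ne : ∀ i, b i ≠ t i := by
    intro i h
    have h2 : (φ ⟨Sum.inl (i, (z0 : CopyT)), inl_mem_copiesAll _⟩) =
        (φ ⟨Sum.inl (i, (⊤ : CopyT)), inl_mem_copiesAll _⟩) := Subtype.ext h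
    have h4 := φ.injective h2
    exact copy_bot_ne_top i (Subtype.ext_iff.mp h4)
  have hble : ∀ i, b i ≤ t i := by
    intro i
    exact φ.monotone (show (⟨Sum.inl (i, (z0 : CopyT)), inl_mem_copiesAll _⟩ :
      ↥(subposet (HH l B) (copiesAll l B))) ≤
        ⟨Sum.inl (i, (⊤ : CopyT)), inl_mem_copiesAll _⟩
      from inl_le_inl'.mpr ⟨rfl, le_top⟩)
  have hpdt : ∀ i, pd Q (t i) = {b i, t i} := by
    intro i
    refine (Finset.eq_of_subset_of_card_le ?_ ?_).symm
    · intro a ha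
      rcases Finset.mem_insert.mp ha with rfl | ha2
      · exact mem_pd.mpr (hble i)
      · rw [Finset.mem_singleton.mp ha2]
        exact mem_pd.mpr le_rfl
    · rw [hpdt_card i, Finset.card_insert_of_notMem (fun h =>
        hbt_ne i (Finset.mem_singleton.mp h)), Finset.card_singleton]
  have htnex : ∀ i, t i ≠ x := by
    intro i h
    have hcc : (pd Q (t i)).card = (pd Q x).card := by rw [h]
    rw [hpdt_card, hpdx] at hcc
    omega
  have hti_nle : ∀ i, ¬ t i ≤ x := by
    intro i hle
    exact hbt_ne i (hmin (t i) hle (htnex i) (b i) (hble i))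
  have hbnex : ∀ i, b i ≠ x := by
    intro i h
    have hxle : x ≤ t i := h ▸ hble i
    have hsub : pd Q x ⊆ pd Q (t i) :=
      fun a ha => mem_pd.mpr (le_trans (mem_pd.mp ha) hxle)
    have hcc := Finset.card_le_card hsub
    rw [hpdx, hpdt_card] at hcc
    omega
  have hx_tb : ∀ i, Disjoint (pd Q x) (pd Q (t i)) := by
    intro i
    rw [Finset.disjoint_left]
    intro v hvx hvt
    rw [hpdt i] at hvt
    have hbx : b i ≤ x := by
      rcases Finset.mem_insert.mp hvt with rfl | hvt2
      · exact mem_pd.mp hvx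
      · exact absurd (mem_pd.mp hvx) ((Finset.mem_singleton.mp hvt2) ▸ hti_nle i)
    set S := pd Q x ∪ pd Q (t i) with hS
    have hSdown : IsDownset Q S := by
      intro a2 b2 ha2 hb2
      rcases Finset.mem_union.mp ha2 with h | h
      · exact Finset.mem_union_left _ (mem_pd.mpr (le_trans hb2 (mem_pd.mp h)))
      · exact Finset.mem_union_right _ (mem_pd.mpr (le_trans hb2 (mem_pd.mp h)))
    have hinter : pd Q x ∩ pd Q (t i) = {b i} := by
      ext w
      rw [Finset.mem_inter, Finset.mem_singleton]
      constructor
      · rintro ⟨hw1, hw2⟩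
        rw [hpdt i] at hw2
        rcases Finset.mem_insert.mp hw2 with rfl | hw3
        · rfl
        · exact absurd (mem_pd.mp hw1) ((Finset.mem_singleton.mp hw3) ▸ hti_nle i)
      · rintro rfl
        exact ⟨mem_pd.mpr hbx, mem_pd.mpr (hble i)⟩
    have hScard : S.card = 2 * l := by
      have hc := Finset.card_union_add_card_inter (pd Q x) (pd Q (t i))
      rw [hinter, hpdx, hpdt_card, Finset.card_singleton] at hc
      rw [hS]
      omega
    have hSmem : cls (subposet Q S) ∈ DSet (2 * l) (HH l B) := by
      rw [← hW]
      exact ⟨S, hSdown, hScard, rfl⟩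
    obtain ⟨G', hG'd, hG'c, hG'cls⟩ := hSmem
    obtain ⟨ρ⟩ := cls_eq_iff.mp hG'cls
    set σ := ρ.symm with hσ
    have hxS : x ∈ S := Finset.mem_union_left _ (mem_pd.mpr le_rfl)
    have htS : t i ∈ S := Finset.mem_union_right _ (mem_pd.mpr le_rfl)
    have hbS : b i ∈ S := Finset.mem_union_right _ (mem_pd.mpr (hble i))
    have hlt1 : (⟨b i, hbS⟩ : ↥(subposet Q S)) < ⟨x, hxS⟩ :=
      lt_of_le_of_ne hbx (fun h => hbnex i (Subtype.mk_eq_mk.mp h))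
    have hlt2 : (⟨b i, hbS⟩ : ↥(subposet Q S)) < ⟨t i, htS⟩ :=
      lt_of_le_of_ne (hble i) (fun h => hbt_ne i (Subtype.mk_eq_mk.mp h))
    have hlt1' := σ.strictMono hlt1
    have hlt2' := σ.strictMono hlt2
    have hltv1 : (σ ⟨b i, hbS⟩).1 < (σ ⟨x, hxS⟩).1 := Subtype.coe_lt_coe.mpr hlt1'
    have hltv2 : (σ ⟨b i, hbS⟩).1 < (σ ⟨t i, htS⟩).1 := Subtype.coe_lt_coe.mpr hlt2'
    have heq := upper_unique hltv1 hltv2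
    have heq2 : σ ⟨x, hxS⟩ = σ ⟨t i, htS⟩ := Subtype.ext heq
    have heq3 := σ.injective heq2
    exact htnex i (Subtype.mk_eq_mk.mp heq3).symm
  have ht_tb : ∀ i i' : Fin l, i ≠ i' → Disjoint (pd Q (t i)) (pd Q (t i')) := by
    intro i i' hne
    have key : ∀ (y y' : CopyT),
        (φ ⟨Sum.inl (i, y), inl_mem_copiesAll _⟩).1 =
          (φ ⟨Sum.inl (i', y'), inl_mem_copiesAll _⟩).1 → False := by
      intro y y' heq
      have h2 := φ.injective (Subtype.ext heq)
      have h3 := Subtype.ext_iff.mp h2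
      exact hne (congrArg Prod.fst (Sum.inl_injective h3))
    rw [hpdt i, hpdt i', Finset.disjoint_left]
    intro a ha ha'
    rcases Finset.mem_insert.mp ha with rfl | ha2
    · rcases Finset.mem_insert.mp ha' with h' | h'
      · exact key _ _ h'
      · exact key _ _ (Finset.mem_singleton.mp h')
    · rw [Finset.mem_singleton.mp ha2] at ha'
      rcases Finset.mem_insert.mp ha' with h' | h'
      · exact key _ _ h'
      · exact key _ _ (Finset.mem_singleton.mp h')
  set T := Finset.univ.biUnion (fun i : Fin l => pd Q (t i)) with hT
  have hTcard : T.card = 2 * l := by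
    rw [hT, Finset.card_biUnion (fun i _ i' _ hne => ht_tb i i' hne)]
    calc ∑ i : Fin l, (pd Q (t i)).card = ∑ _i : Fin l, 2 :=
          Finset.sum_congr rfl (fun i _ => hpdt_card i)
      _ = 2 * l := by
          rw [Finset.sum_const, Finset.card_univ, Fintype.card_fin, smul_eq_mul]
          ring
  have hdisjT : Disjoint (pd Q x) T := by
    rw [hT, Finset.disjoint_biUnion_right]
    exact fun i _ => hx_tb i
  calc B + 1 + 2 * l = (pd Q x ∪ T).card := by
        rw [Finset.card_union_of_disjoint hdisjT, hpdx, hTcard]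
    _ ≤ (Finset.univ : Finset ↥Q).card := Finset.card_le_univ _
    _ = size Q := by rw [Finset.card_univ]; rfl

end NLW6
namespace NLW7
open NLW NLW2 NLW3 NLW4 NLW5 NLW6

lemma ncard_bound {l B : ℕ} (hB : B + 2 = 2 * l) :
    (DSet (2 * l) (HH l B)).ncard ≤ l + 2 := by
  classical
  have hsub : DSet (2 * l) (HH l B) ⊆
      insert (cls (ModelFlag B))
        ((fun j => cls (ModelU j (2 * l - 2 * j))) '' ↑(Finset.range (l + 1))) := by
    rintro cc ⟨D, hD, hcard, rfl⟩
    by_cases htop : (Sum.inr ⊤ : HCar l B) ∈ D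
    · exact Set.mem_insert_iff.mpr
        (Or.inl (cls_eq_iff.mpr (classify_flag hD hB hcard htop)))
    · obtain ⟨j, hjl, hiso⟩ := classify_unflag hD hcard htop
      refine Set.mem_insert_iff.mpr (Or.inr ⟨j, ?_, (cls_eq_iff.mpr hiso).symm⟩)
      exact Finset.mem_coe.mpr (Finset.mem_range.mpr (by omega))
  have hfin : ((fun j => cls (ModelU j (2 * l - 2 * j))) '' ↑(Finset.range (l + 1))).Finite :=
    ((Finset.range (l + 1)).finite_toSet).image _
  calc (DSet (2 * l) (HH l B)).ncard
      ≤ (insert (cls (ModelFlag B))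
          ((fun j => cls (ModelU j (2 * l - 2 * j))) '' ↑(Finset.range (l + 1)))).ncard :=
        Set.ncard_le_ncard hsub (hfin.insert _)
    _ ≤ ((fun j => cls (ModelU j (2 * l - 2 * j))) '' ↑(Finset.range (l + 1))).ncard + 1 :=
        Set.ncard_insert_le _ _
    _ ≤ ((Finset.range (l + 1) : Finset ℕ) : Set ℕ).ncard + 1 :=
        Nat.add_le_add_right (Set.ncard_image_le ((Finset.range (l + 1)).finite_toSet)) 1
    _ = l + 2 := by rw [Set.ncard_coe_finset, Finset.card_range]

end NLW7

/-- For every constant `c` there exist `n`, `k` and a set `Γ` of `k`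
pairwise non-isomorphic posets of size `n` such that `Γ` has a witness, but no witness of
`Γ` has size at most `n + k + c`. -/
theorem no_linear_witness_bound (c : ℕ) :
    ∃ (n k : ℕ) (Γ : Set UPoset), Γ.Finite ∧ Γ.ncard = k ∧ (∀ x ∈ Γ, usize x = n) ∧
      (∃ Q : FinPartOrd.{0}, IsWitness n Γ Q) ∧
      ∀ Q : FinPartOrd.{0}, IsWitness n Γ Q → n + k + c < size Q := by
  classical
  set l := c + 5 with hldef
  set B := 2 * l - 2 with hBdef
  have hB : B + 2 = 2 * l := by omega
  have hl : 2 ≤ l := by omega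
  have hB2 : 2 ≤ B := by omega
  refine ⟨2 * l, (DSet (2 * l) (NLW.HH l B)).ncard, DSet (2 * l) (NLW.HH l B),
    NLW2.dset_finite _ _, rfl, ?_, ⟨NLW.HH l B, rfl⟩, ?_⟩
  · rintro xx ⟨D, hD, hcard, rfl⟩
    rw [NLW2.usize_cls, NLW2.size_subposet, hcard]
  · intro Q hQ
    have hk : (DSet (2 * l) (NLW.HH l B)).ncard ≤ l + 2 := NLW7.ncard_bound hB
    have hsz := NLW6.size_lb hl hB2 hB Q hQ
    omega
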